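/- arXiv:1809.02241 — 2 statements merged into one kernel-verified Lean document; each statement's English description precedes it below -/
import Mathlib

section
/- Under the same hypotheses (f absolutely continuous with ‖ḟ‖ < ∞, g a step function adapted to the uniform partition of [a,b] into d pieces, Δ = f − g), for every ε̃ > 0 one has the reverse comparison ‖Δ‖_d² ≤ (1 + ε̃) ‖Δ‖² + (1 + 1/ε̃) (b−a)² ‖ḟ‖² / d². -/
set_option maxHeartbeats 1000000

open MeasureTheory

theorem young_aux (u v ε : ℝ) (hε : 0 < ε) : (u + v)^2 ≤ (1+ε)*u^2 + (1+1/ε)*v^2 := by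
  have hinv : ε * (1/ε) = 1 := by field_simp
  have hkey : ε * ((1+ε)*u^2 + (1+1/ε)*v^2 - (u+v)^2) = (ε*u - v)^2 := by
    linear_combination v^2 * hinv
  nlinarith [sq_nonneg (ε*u - v), mul_pos hε hε]

theorem cs_aux (x y : ℝ) (hxy : x ≤ y) (F : ℝ → ℝ)
    (hF : IntervalIntegrable F volume x y)
    (hF2 : IntervalIntegrable (fun t => F t ^ 2) volume x y) :
    (∫ t in x..y, F t) ^ 2 ≤ (y - x) * ∫ t in x..y, F t ^ 2 := by
  rcases eq_or_lt_of_le hxy with rfl | hlt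
  · simp
  set L := y - x with hL
  have hL0 : 0 < L := by simp [hL]; linarith
  set B := ∫ t in x..y, F t with hB
  set A := ∫ t in x..y, F t ^ 2 with hA
  have h0 : (0:ℝ) ≤ ∫ t in x..y, (F t - B / L)^2 :=
    intervalIntegral.integral_nonneg hxy (fun u _ => sq_nonneg _)
  have hexp : (∫ t in x..y, (F t - B / L)^2)
      = A - 2*(B/L)*B + (B/L)^2 * L := by
    have heq : ∀ t : ℝ, (F t - B/L)^2 = F t ^ 2 - (2*(B/L)) * F t + (B/L)^2 := by
      intro t; ring
    simp_rw [heq]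
    rw [intervalIntegral.integral_add ((hF2.sub (hF.const_mul _))) intervalIntegrable_const,
      intervalIntegral.integral_sub hF2 (hF.const_mul _),
      intervalIntegral.integral_const_mul, intervalIntegral.integral_const]
    simp only [smul_eq_mul, ← hA, ← hB, ← hL]
    ring
  rw [hexp] at h0
  have : B^2 / L ≤ A := by
    have h1 : (B/L)^2 * L = B^2 / L := by field_simp
    have h2 : 2*(B/L)*B = 2 * (B^2/L) := by field_simp
    nlinarith
  calc B^2 = (B^2 / L) * L := by field_simp
    _ ≤ A * L := by nlinarith
    _ = L * A := by ring

theorem discrete_vs_continuous_norm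
    (a b : ℝ) (hab : a < b) (d : ℕ) (hd : 1 ≤ d)
    (f f' g : ℝ → ℝ)
    (hf : ∀ x ∈ Set.Icc a b, HasDerivAt f (f' x) x)
    (hf'2 : IntervalIntegrable (fun x => (f' x) ^ 2) volume a b)
    (p : ℕ) (c : ℕ → ℝ)
    (hg : ∀ j ∈ Finset.Icc 1 d,
      ∀ t ∈ Set.Ioc (a + ((j : ℝ) - 1) * (b - a) / d) (a + (j : ℝ) * (b - a) / d), g t = c j)
    (ε : ℝ) (hε : 0 < ε) :
    ((b - a) / d) *
        ∑ l ∈ Finset.Icc 1 d, (f (a + (l : ℝ) * (b - a) / d) - g (a + (l : ℝ) * (b - a) / d)) ^ 2 ≤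
      (1 + ε) * (∫ x in a..b, (f x - g x) ^ 2)
      + (1 + 1 / ε) * (b - a) ^ 2 * (∫ x in a..b, (f' x) ^ 2) / d ^ 2 := by
  have hd0 : (0:ℝ) < (d:ℝ) := by exact_mod_cast hd
  have hba : (0:ℝ) < b - a := by linarith
  set h := (b - a) / (d:ℝ) with hh_def
  have hh : 0 < h := div_pos hba hd0
  set X : ℕ → ℝ := fun j => a + (j:ℝ) * (b - a) / (d:ℝ) with hX
  have hXsucc : ∀ j : ℕ, X (j+1) - X j = h := by
    intro j; simp only [hX, hh_def]; push_cast; field_simp; ring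
  have hX0 : X 0 = a := by simp [hX]
  have hXd : X d = b := by
    simp only [hX]; field_simp; ring
  have hXa : ∀ k : ℕ, a ≤ X k := by
    intro k
    simp only [hX, le_add_iff_nonneg_right]
    positivity
  have hXb : ∀ k : ℕ, k ≤ d → X k ≤ b := by
    intro k hk
    have : (k:ℝ) ≤ (d:ℝ) := by exact_mod_cast hk
    simp only [hX]
    have h1 : (k:ℝ) * (b-a) / d ≤ b - a := by
      rw [div_le_iff₀ hd0]; nlinarith
    linarith
  have hXlt : ∀ k : ℕ, X k < X (k+1) := by
    intro k; have := hXsucc k; linarith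
  -- f continuous on [a,b]
  have hfc : ContinuousOn f (Set.Icc a b) := fun x hx =>
    (hf x hx).continuousAt.continuousWithinAt
  -- f' interval integrable on a b
  have hf'aes : AEStronglyMeasurable f' (volume.restrict (Set.uIoc a b)) := by
    apply (measurable_deriv f).aestronglyMeasurable.congr
    apply (ae_restrict_iff' measurableSet_uIoc).mpr
    filter_upwards with x hx
    have hx' : x ∈ Set.Icc a b := by
      rw [Set.uIoc_of_le hab.le] at hx
      exact Set.Ioc_subset_Icc_self hx
    exact ((hf x hx').deriv).symm ▸ rfl
  have hf'int : IntervalIntegrable f' volume a b := by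
    apply IntervalIntegrable.mono_fun'
      ((hf'2.add (intervalIntegrable_const (c := (1:ℝ)))).div_const 2) hf'aes
    filter_upwards with x
    simp only [Real.norm_eq_abs]
    nlinarith [sq_nonneg (|f' x| - 1), sq_abs (f' x)]
  -- per-piece integrability
  have hsubIcc : ∀ k : ℕ, k < d → Set.Icc (X k) (X (k+1)) ⊆ Set.Icc a b := by
    intro k hk
    exact Set.Icc_subset_Icc (hXa k) (hXb (k+1) hk)
  have hsubuIoc : ∀ k : ℕ, k < d → Set.uIoc (X k) (X (k+1)) ⊆ Set.uIoc a b := by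
    intro k hk
    rw [Set.uIoc_of_le (hXlt k).le, Set.uIoc_of_le hab.le]
    exact Set.Ioc_subset_Ioc (hXa k) (hXb (k+1) hk)
  have hf'int_k : ∀ k : ℕ, k < d → IntervalIntegrable f' volume (X k) (X (k+1)) :=
    fun k hk => hf'int.mono_set' (hsubuIoc k hk)
  have hf'2int_k : ∀ k : ℕ, k < d →
      IntervalIntegrable (fun x => (f' x)^2) volume (X k) (X (k+1)) :=
    fun k hk => hf'2.mono_set' (hsubuIoc k hk)
  -- g is constant on each piece
  have hgc : ∀ k : ℕ, k < d → ∀ t ∈ Set.Ioc (X k) (X (k+1)), g t = c (k+1) := by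
    intro k hk t ht
    have hmem : (k+1) ∈ Finset.Icc 1 d := by
      simp [Nat.succ_le_of_lt hk]
    have := hg (k+1) hmem t ?_
    · exact this
    · convert ht using 3 <;> push_cast <;> ring
  have hΔ2int_k : ∀ k : ℕ, k < d →
      IntervalIntegrable (fun x => (f x - g x)^2) volume (X k) (X (k+1)) := by
    intro k hk
    rw [intervalIntegrable_iff_integrableOn_Ioc_of_le (hXlt k).le]
    have hcont : ContinuousOn (fun x => (f x - c (k+1))^2) (Set.Icc (X k) (X (k+1))) :=
      ((hfc.mono (hsubIcc k hk)).sub continuousOn_const).pow 2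
    have hint : IntegrableOn (fun x => (f x - c (k+1))^2) (Set.Ioc (X k) (X (k+1))) volume :=
      (hcont.integrableOn_Icc).mono_set Set.Ioc_subset_Icc_self
    apply hint.congr_fun _ measurableSet_Ioc
    intro t ht
    show (f t - c (k+1))^2 = (f t - g t)^2
    rw [hgc k hk t ht]
  -- key per-piece inequality
  have key : ∀ k : ℕ, k < d →
      h * (f (X (k+1)) - g (X (k+1)))^2 ≤
        (1+ε) * (∫ x in (X k)..(X (k+1)), (f x - g x)^2)
        + (1+1/ε) * h^2 * (∫ x in (X k)..(X (k+1)), (f' x)^2) := by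
    intro k hk
    set y := X (k+1) with hy
    have hky : X k < y := hXlt k
    set C : ℝ := (1+1/ε) * h * (∫ x in (X k)..y, (f' x)^2) with hC
    have hgy : g y = c (k+1) := hgc k hk y ⟨hky, le_refl y⟩
    -- pointwise inequality on the Ioc
    have pointwise : ∀ x ∈ Set.Ioc (X k) y,
        (f y - g y)^2 ≤ (1+ε) * (f x - g x)^2 + C := by
      intro x hx
      have hxy : x ≤ y := hx.2
      have hxa : a ≤ x := le_trans (hXa k) hx.1.le
      have hyb : y ≤ b := hXb (k+1) hk
      have hgx : g x = c (k+1) := hgc k hk x hx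
      have hsub' : Set.uIoc x y ⊆ Set.uIoc (X k) y := by
        rw [Set.uIoc_of_le hxy, Set.uIoc_of_le hky.le]
        exact Set.Ioc_subset_Ioc hx.1.le le_rfl
      have hf'x : IntervalIntegrable f' volume x y := (hf'int_k k hk).mono_set' hsub'
      have hf'2x : IntervalIntegrable (fun t => (f' t)^2) volume x y :=
        (hf'2int_k k hk).mono_set' hsub'
      have hftc : ∫ t in x..y, f' t = f y - f x := by
        apply intervalIntegral.integral_eq_sub_of_hasDerivAt
        · intro t ht
          rw [Set.uIcc_of_le hxy] at ht
          exact hf t ⟨le_trans hxa ht.1, le_trans ht.2 hyb⟩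
        · exact hf'x
      set I := ∫ t in x..y, f' t with hI
      have hΔ : f y - g y = (f x - g x) + I := by
        rw [hgy, hgx, hftc]; ring
      have hyoung := young_aux (f x - g x) I ε hε
      have hcs : I^2 ≤ (y - x) * ∫ t in x..y, (f' t)^2 := cs_aux x y hxy f' hf'x hf'2x
      have hsplit : (∫ t in (X k)..y, (f' t)^2)
          = (∫ t in (X k)..x, (f' t)^2) + ∫ t in x..y, (f' t)^2 := by
        rw [intervalIntegral.integral_add_adjacent_intervals
          ((hf'2int_k k hk).mono_set' (by
            rw [Set.uIoc_of_le hx.1.le, Set.uIoc_of_le hky.le]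
            exact Set.Ioc_subset_Ioc le_rfl hxy))
          hf'2x]
      have hpos1 : 0 ≤ ∫ t in (X k)..x, (f' t)^2 :=
        intervalIntegral.integral_nonneg hx.1.le (fun u _ => sq_nonneg _)
      have hpos2 : 0 ≤ ∫ t in x..y, (f' t)^2 :=
        intervalIntegral.integral_nonneg hxy (fun u _ => sq_nonneg _)
      have hyx : y - x ≤ h := by
        have := hXsucc k
        have : y - X k = h := this
        linarith [hx.1]
      have hI2 : I^2 ≤ h * (∫ t in (X k)..y, (f' t)^2) := by
        calc I^2 ≤ (y - x) * ∫ t in x..y, (f' t)^2 := hcs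
          _ ≤ h * ∫ t in x..y, (f' t)^2 := by nlinarith
          _ ≤ h * (∫ t in (X k)..y, (f' t)^2) := by
              rw [hsplit]; nlinarith
      have hC' : (1+1/ε) * I^2 ≤ C := by
        rw [hC]
        have hpos3 : (0:ℝ) < 1 + 1/ε := by positivity
        calc (1+1/ε) * I^2 ≤ (1+1/ε) * (h * (∫ t in (X k)..y, (f' t)^2)) := by
              exact mul_le_mul_of_nonneg_left hI2 hpos3.le
          _ = (1+1/ε) * h * (∫ t in (X k)..y, (f' t)^2) := by ring
      rw [hΔ]
      calc ((f x - g x) + I)^2 ≤ (1+ε)*(f x - g x)^2 + (1+1/ε)*I^2 := hyoung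
        _ ≤ (1+ε)*(f x - g x)^2 + C := by linarith
    -- integrate over Ioc (X k) y
    have hmeas : MeasurableSet (Set.Ioc (X k) y) := measurableSet_Ioc
    have hvol : (volume (Set.Ioc (X k) y)).toReal = h := by
      rw [Real.volume_Ioc, ENNReal.toReal_ofReal (by linarith [hXsucc k] : (0:ℝ) ≤ y - X k)]
      exact hXsucc k
    have hΔ2on : IntegrableOn (fun x => (f x - g x)^2) (Set.Ioc (X k) y) volume := by
      have := hΔ2int_k k hk
      rwa [intervalIntegrable_iff_integrableOn_Ioc_of_le hky.le] at this
    have hrhsint : IntegrableOn (fun x => (1+ε) * (f x - g x)^2 + C) (Set.Ioc (X k) y) volume := by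
      apply Integrable.add (hΔ2on.const_mul _)
      apply (integrableOn_const_iff (C := C)).mpr
      right
      exact measure_Ioc_lt_top
    have hstep := setIntegral_mono_on ((integrableOn_const_iff (C := (f y - g y)^2)).mpr (Or.inr measure_Ioc_lt_top))
      hrhsint hmeas pointwise
    rw [setIntegral_const, smul_eq_mul, measureReal_def, hvol] at hstep
    have hrhsval : (∫ x in Set.Ioc (X k) y, ((1+ε) * (f x - g x)^2 + C)) =
        (1+ε) * (∫ x in (X k)..y, (f x - g x)^2) + h * C := by
      rw [integral_add (hΔ2on.const_mul _) ((integrableOn_const_iff (C := C)).mpr (Or.inr measure_Ioc_lt_top)),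
        integral_const_mul, setIntegral_const, smul_eq_mul, measureReal_def, hvol,
        intervalIntegral.integral_of_le hky.le]
    rw [hrhsval] at hstep
    calc h * (f y - g y)^2 ≤ (1+ε) * (∫ x in (X k)..y, (f x - g x)^2) + h * C := hstep
      _ = (1+ε) * (∫ x in (X k)..y, (f x - g x)^2)
          + (1+1/ε) * h^2 * (∫ x in (X k)..y, (f' x)^2) := by rw [hC]; ring
  -- sum up
  have hsum1 : ∑ k ∈ Finset.range d, ∫ x in (X k)..(X (k+1)), (f x - g x)^2
      = ∫ x in a..b, (f x - g x)^2 := by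
    rw [intervalIntegral.sum_integral_adjacent_intervals (fun k hk => hΔ2int_k k hk), hX0, hXd]
  have hsum2 : ∑ k ∈ Finset.range d, ∫ x in (X k)..(X (k+1)), (f' x)^2
      = ∫ x in a..b, (f' x)^2 := by
    rw [intervalIntegral.sum_integral_adjacent_intervals (fun k hk => hf'2int_k k hk), hX0, hXd]
  have hreindex : ∑ l ∈ Finset.Icc 1 d, (f (a + (l : ℝ) * (b - a) / d) -
        g (a + (l : ℝ) * (b - a) / d)) ^ 2
      = ∑ k ∈ Finset.range d, (f (X (k+1)) - g (X (k+1)))^2 := by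
    rw [← Finset.Ico_add_one_right_eq_Icc, Finset.sum_Ico_eq_sum_range]
    refine Finset.sum_congr (by norm_num) fun k _ => ?_
    rw [Nat.add_comm 1 k]
  calc ((b - a) / d) * ∑ l ∈ Finset.Icc 1 d, (f (a + (l : ℝ) * (b - a) / d) -
        g (a + (l : ℝ) * (b - a) / d)) ^ 2
      = ∑ k ∈ Finset.range d, h * (f (X (k+1)) - g (X (k+1)))^2 := by
        rw [hreindex, Finset.mul_sum]
    _ ≤ ∑ k ∈ Finset.range d, ((1+ε) * (∫ x in (X k)..(X (k+1)), (f x - g x)^2)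
        + (1+1/ε) * h^2 * (∫ x in (X k)..(X (k+1)), (f' x)^2)) := by
        apply Finset.sum_le_sum
        intro k hk
        exact key k (Finset.mem_range.mp hk)
    _ = (1+ε) * (∫ x in a..b, (f x - g x)^2) + (1+1/ε) * h^2 * (∫ x in a..b, (f' x)^2) := by
        rw [Finset.sum_add_distrib, ← Finset.mul_sum, ← Finset.mul_sum, hsum1, hsum2]
    _ = (1 + ε) * (∫ x in a..b, (f x - g x) ^ 2)
        + (1 + 1 / ε) * (b - a) ^ 2 * (∫ x in a..b, (f' x) ^ 2) / d ^ 2 := by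
        rw [hh_def]; field_simp; try ring
end

section
/- Consider the autoregressive process y_k = S(x_k) y_{k−1} + ξ_k for 1 ≤ k ≤ n, where x_k = a + k(b−a)/n, y_0 is a fixed constant, (ξ_k) are i.i.d. with mean 0, variance 1, and all moments satisfying E|ξ_1|^{2t} ≤ ς^t (2t−1)!! for some ς ≥ 1, and |S(x)| ≤ 1 − ε for all x ∈ [a,b] with 0 < ε < 1. Then for every t ∈ ℕ*, sup_{n≥1} sup_{0≤k≤n} sup_S E y_k^{2t} < ∞, where the supremum over S is over all continuously differentiable S with |S|_∞ ≤ 1 − ε. -/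
open MeasureTheory ProbabilityTheory
open scoped ENNReal NNReal

lemma aux_indep_sum_lintegral_top {Ω : Type*} [MeasurableSpace Ω] (μ : Measure Ω)
    [IsProbabilityMeasure μ] (X Y : Ω → ℝ) (hX : Measurable X) (hY : Measurable Y)
    (h : IndepFun X Y μ) (r : ℕ)
    (hYinf : ∫⁻ ω, (‖Y ω‖₊ : ℝ≥0∞) ^ r ∂μ = ⊤) :
    ∫⁻ ω, (‖X ω + Y ω‖₊ : ℝ≥0∞) ^ r ∂μ = ⊤ := by
  have hφ : Measurable fun x : ℝ => (‖x‖₊ : ℝ≥0∞) ^ r :=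
    (measurable_nnnorm.coe_nnreal_ennreal).pow_const r
  have hmap : μ.map (fun ω => (X ω, Y ω)) = (μ.map X).prod (μ.map Y) :=
    (indepFun_iff_map_prod_eq_prod_map_map hX.aemeasurable hY.aemeasurable).mp h
  have hYlaw : IsProbabilityMeasure (μ.map Y) := Measure.isProbabilityMeasure_map hY.aemeasurable
  have hXlaw : IsProbabilityMeasure (μ.map X) := Measure.isProbabilityMeasure_map hX.aemeasurable
  have hY' : ∫⁻ y, (‖y‖₊ : ℝ≥0∞) ^ r ∂(μ.map Y) = ⊤ := by
    rw [lintegral_map hφ hY]; exact hYinf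
  have hadd : Measurable fun q : ℝ × ℝ => (‖q.1 + q.2‖₊ : ℝ≥0∞) ^ r :=
    hφ.comp (measurable_fst.add measurable_snd)
  have key : ∫⁻ ω, (‖X ω + Y ω‖₊ : ℝ≥0∞) ^ r ∂μ
      = ∫⁻ x, ∫⁻ y, (‖x + y‖₊ : ℝ≥0∞) ^ r ∂(μ.map Y) ∂(μ.map X) := by
    rw [← lintegral_prod _ hadd.aemeasurable, ← hmap,
      lintegral_map hadd (hX.prodMk hY)]
  rw [key]
  have hinner : ∀ x : ℝ, ∫⁻ y, (‖x + y‖₊ : ℝ≥0∞) ^ r ∂(μ.map Y) = ⊤ := by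
    intro x
    by_contra hfin
    have hb : ∀ y : ℝ, (‖y‖₊ : ℝ≥0∞) ^ r ≤ 2 ^ r * ((‖x + y‖₊ : ℝ≥0∞) ^ r + (‖x‖₊ : ℝ≥0∞) ^ r) := by
      intro y
      have h1 : (‖y‖₊ : ℝ≥0∞) ≤ (‖x + y‖₊ : ℝ≥0∞) + (‖x‖₊ : ℝ≥0∞) := by
        have : ‖y‖₊ ≤ ‖x + y‖₊ + ‖x‖₊ := by
          calc ‖y‖₊ = ‖(x + y) - x‖₊ := by ring_nf
          _ ≤ ‖x + y‖₊ + ‖x‖₊ := nnnorm_sub_le _ _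
        exact_mod_cast this
      calc (‖y‖₊ : ℝ≥0∞) ^ r ≤ ((‖x + y‖₊ : ℝ≥0∞) + (‖x‖₊ : ℝ≥0∞)) ^ r :=
            pow_le_pow_left' h1 r
        _ ≤ (2 * max (‖x + y‖₊ : ℝ≥0∞) (‖x‖₊ : ℝ≥0∞)) ^ r := by
            gcongr
            rw [two_mul]
            exact add_le_add (le_max_left _ _) (le_max_right _ _)
        _ = 2 ^ r * (max (‖x + y‖₊ : ℝ≥0∞) (‖x‖₊ : ℝ≥0∞)) ^ r := by rw [mul_pow]
        _ ≤ 2 ^ r * ((‖x + y‖₊ : ℝ≥0∞) ^ r + (‖x‖₊ : ℝ≥0∞) ^ r) := by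
            gcongr
            rcases max_cases ((‖x + y‖₊ : ℝ≥0∞)) ((‖x‖₊ : ℝ≥0∞)) with ⟨he, _⟩ | ⟨he, _⟩ <;>
              rw [he]
            · exact le_add_right le_rfl
            · exact le_add_left le_rfl

    have := lintegral_mono hb (μ := μ.map Y)
    rw [hY'] at this
    have hfin2 : ∫⁻ y, 2 ^ r * ((‖x + y‖₊ : ℝ≥0∞) ^ r + (‖x‖₊ : ℝ≥0∞) ^ r) ∂(μ.map Y) < ⊤ := by
      have hm : Measurable fun y : ℝ => (‖x + y‖₊ : ℝ≥0∞) ^ r := by fun_prop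
      rw [lintegral_const_mul _ (f := fun y : ℝ => (‖x + y‖₊ : ℝ≥0∞) ^ r + (‖x‖₊ : ℝ≥0∞) ^ r) (hm.add measurable_const),
        lintegral_add_right _ measurable_const, lintegral_const]
      have h2 : (2 : ℝ≥0∞) ^ r ≠ ⊤ := by simp
      have h3 : ∫⁻ y, (‖x + y‖₊ : ℝ≥0∞) ^ r ∂(μ.map Y) ≠ ⊤ := hfin
      simp only [measure_univ, mul_one]
      refine ENNReal.mul_lt_top h2.lt_top (ENNReal.add_lt_top.mpr ⟨h3.lt_top, ?_⟩)
      exact ENNReal.pow_lt_top ENNReal.coe_lt_top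
    exact absurd (this.trans_lt hfin2) (by simp)
  simp only [hinner]
  simp [lintegral_const, measure_univ]

theorem uniform_moment_bound_autoregression
    {Ω : Type*} [m0 : MeasurableSpace Ω] (μ : Measure Ω) [IsProbabilityMeasure μ]
    (a b : ℝ) (hab : a < b) (ε : ℝ) (hε0 : 0 < ε) (hε1 : ε < 1)
    (ς : ℝ) (hς : 1 ≤ ς)
    (ξ : ℕ → Ω → ℝ) (hmeas : ∀ k, Measurable (ξ k))
    (hindep : iIndepFun ξ μ)
    (hident : ∀ k, μ.map (ξ k) = μ.map (ξ 1))
    (hmean : ∫ ω, ξ 1 ω ∂μ = 0)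
    (hvar : ∫ ω, (ξ 1 ω) ^ 2 ∂μ = 1)
    (hmom : ∀ s : ℕ, ∫ ω, |ξ 1 ω| ^ (2 * s) ∂μ ≤ ς ^ s * (Nat.doubleFactorial (2 * s - 1) : ℝ))
    (y0 : ℝ) (t : ℕ) (ht : 1 ≤ t) :
    ∃ C : ℝ, ∀ n : ℕ, 1 ≤ n → ∀ S : ℝ → ℝ, ContDiff ℝ 1 S →
      (∀ x ∈ Set.Icc a b, |S x| ≤ 1 - ε) →
      ∀ y : ℕ → Ω → ℝ, (∀ ω, y 0 ω = y0) →
        (∀ k, 1 ≤ k → k ≤ n →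
          ∀ ω, y k ω = S (a + (k : ℝ) * (b - a) / n) * y (k - 1) ω + ξ k ω) →
        ∀ k ≤ n, ∫ ω, (y k ω) ^ (2 * t) ∂μ ≤ C := by
  classical
  set p : ℝ≥0∞ := ((2 * t : ℕ) : ℝ≥0∞) with hpdef
  have ht2 : 1 ≤ 2 * t := by omega
  have hp0 : p ≠ 0 := by
    simp only [hpdef, ne_eq, Nat.cast_eq_zero]; omega
  have hptop : p ≠ ⊤ := ENNReal.natCast_ne_top _
  have hp1 : 1 ≤ p := by
    rw [hpdef]; exact_mod_cast Nat.one_le_cast.mpr ht2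
  have hpr : p.toReal = ((2 * t : ℕ) : ℝ) := by simp [hpdef]
  have hφ : Measurable fun x : ℝ => (‖x‖₊ : ℝ≥0∞) ^ (2 * t) :=
    (measurable_nnnorm.coe_nnreal_ennreal).pow_const _
  -- eLpNorm to the power 2t equals the lintegral of the 2t-th power of the norm
  have hent : ∀ f : Ω → ℝ,
      (eLpNorm f p μ) ^ (2 * t) = ∫⁻ ω, (‖f ω‖₊ : ℝ≥0∞) ^ (2 * t) ∂μ := by
    intro f
    rw [eLpNorm_eq_lintegral_rpow_enorm_toReal hp0 hptop, hpr]
    simp only [enorm_eq_nnnorm]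
    have hA : ∫⁻ x, (‖f x‖₊ : ℝ≥0∞) ^ (((2 * t : ℕ) : ℝ)) ∂μ
        = ∫⁻ ω, (‖f ω‖₊ : ℝ≥0∞) ^ (2 * t) ∂μ := by
      apply lintegral_congr; intro ω; rw [ENNReal.rpow_natCast]
    rw [hA, ← ENNReal.rpow_natCast _ (2 * t), ← ENNReal.rpow_mul, one_div,
      inv_mul_cancel₀, ENNReal.rpow_one]
    exact_mod_cast (by positivity : ((2 * t : ℕ) : ℝ) ≠ 0)
  -- Bochner integral as toReal of lintegral
  have hconv : ∀ f : Ω → ℝ, Measurable f →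
      ∫ ω, (f ω) ^ (2 * t) ∂μ = (∫⁻ ω, (‖f ω‖₊ : ℝ≥0∞) ^ (2 * t) ∂μ).toReal := by
    intro f hf
    rw [integral_eq_lintegral_of_nonneg_ae (ae_of_all _ fun ω => by
        rw [pow_mul]; positivity) (hf.pow_const _).aestronglyMeasurable]
    congr 1
    apply lintegral_congr; intro ω
    rw [show (f ω) ^ (2 * t) = |f ω| ^ (2 * t) by rw [pow_mul, pow_mul, sq_abs],
      ENNReal.ofReal_pow (abs_nonneg _), ← Real.enorm_eq_ofReal_abs, enorm_eq_nnnorm]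
  -- identical distribution: all ξ k have the same moment lintegral
  have hlint : ∀ k, ∫⁻ ω, (‖ξ k ω‖₊ : ℝ≥0∞) ^ (2 * t) ∂μ
      = ∫⁻ ω, (‖ξ 1 ω‖₊ : ℝ≥0∞) ^ (2 * t) ∂μ := by
    intro k
    rw [← lintegral_map hφ (hmeas k), hident k, lintegral_map hφ (hmeas 1)]
  set Mξ : ℝ≥0∞ := eLpNorm (ξ 1) p μ with hMdef
  have hMk : ∀ k, eLpNorm (ξ k) p μ = Mξ := by
    intro k
    have h1 : (eLpNorm (ξ k) p μ) ^ (2 * t) = (Mξ) ^ (2 * t) := by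
      rw [hent, hent, hlint k]
    have h2t0 : ((2 * t : ℕ) : ℝ) ≠ 0 := by positivity
    have e : ∀ x : ℝ≥0∞, (x ^ (2 * t)) ^ (((2 * t : ℕ) : ℝ)⁻¹) = x := by
      intro x
      rw [← ENNReal.rpow_natCast x (2 * t), ← ENNReal.rpow_mul, mul_inv_cancel₀ h2t0,
        ENNReal.rpow_one]
    calc eLpNorm (ξ k) p μ = ((eLpNorm (ξ k) p μ) ^ (2 * t)) ^ (((2 * t : ℕ) : ℝ)⁻¹) :=
          (e _).symm
      _ = ((Mξ) ^ (2 * t)) ^ (((2 * t : ℕ) : ℝ)⁻¹) := by rw [h1]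
      _ = Mξ := e _
  set B : ℝ≥0∞ := ENNReal.ofReal |y0| + (ENNReal.ofReal ε)⁻¹ * Mξ with hBdef
  refine ⟨max (y0 ^ (2 * t)) ((B ^ (2 * t)).toReal), ?_⟩
  intro n hn S hS hSb y hy0 hrec k hk
  have hn0 : (0 : ℝ) < n := by exact_mod_cast hn
  set c : ℕ → ℝ := fun k => S (a + (k : ℝ) * (b - a) / n) with hcdef
  have hcb : ∀ k, 1 ≤ k → k ≤ n → |c k| ≤ 1 - ε := by
    intro k h1 h2
    apply hSb
    constructor
    · have : 0 ≤ (k : ℝ) * (b - a) / n :=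
        div_nonneg (mul_nonneg (Nat.cast_nonneg k) (by linarith)) hn0.le
      linarith
    · have hkn : (k : ℝ) ≤ n := by exact_mod_cast h2
      have : (k : ℝ) * (b - a) / n ≤ b - a := by
        rw [div_le_iff₀ hn0]
        nlinarith
      linarith
  -- the deterministic recursion as a function of the noise sequence
  set F : ℕ → (ℕ → ℝ) → ℝ :=
    fun m => Nat.rec (fun _ => y0) (fun j Fj v => c (j + 1) * Fj v + v (j + 1)) m with hFdef
  have hFmeas : ∀ m, Measurable (F m) := by
    intro m
    induction m with
    | zero => exact measurable_const
    | succ j ih => exact (measurable_const.mul ih).add (measurable_pi_apply _)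
  have hFdep : ∀ m (v w : ℕ → ℝ), (∀ i, i ≤ m → v i = w i) → F m v = F m w := by
    intro m
    induction m with
    | zero => intro v w _; rfl
    | succ j ih =>
      intro v w hvw
      show c (j + 1) * F j v + v (j + 1) = c (j + 1) * F j w + w (j + 1)
      rw [ih v w (fun i hi => hvw i (Nat.le_succ_of_le hi)), hvw (j + 1) le_rfl]
  set z : ℕ → Ω → ℝ := fun m ω => F m (fun i => ξ i ω) with hzdef
  have hzmeas : ∀ m, Measurable (z m) :=
    fun m => (hFmeas m).comp (measurable_pi_lambda _ hmeas)
  have hzrec : ∀ j ω, z (j + 1) ω = c (j + 1) * z j ω + ξ (j + 1) ω := fun j ω => rfl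
  have hyz : ∀ m, m ≤ n → ∀ ω, y m ω = z m ω := by
    intro m
    induction m with
    | zero => intro _ ω; exact hy0 ω
    | succ j ih =>
      intro hj ω
      rw [hrec (j + 1) (Nat.succ_le_succ (Nat.zero_le _)) hj ω, hzrec]
      simp only [Nat.add_sub_cancel]
      rw [ih (Nat.le_of_succ_le hj) ω]
  have hint : ∫ ω, (y k ω) ^ (2 * t) ∂μ = (∫⁻ ω, (‖z k ω‖₊ : ℝ≥0∞) ^ (2 * t) ∂μ).toReal := by
    rw [show (fun ω => (y k ω) ^ (2 * t)) = fun ω => (z k ω) ^ (2 * t) by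
      funext ω; rw [hyz k hk ω]]
    exact hconv (z k) (hzmeas k)
  by_cases hfin : Mξ = ⊤
  · -- ξ has no 2t-th moment: the integrals are y0^(2t) (k = 0) or 0 (k ≥ 1)
    rcases Nat.eq_zero_or_pos k with rfl | hk1
    · rw [hint]
      have : ∀ ω, z 0 ω = y0 := fun ω => rfl
      simp only [this]
      rw [lintegral_const]
      simp only [measure_univ, mul_one]
      have he : ((‖y0‖₊ : ℝ≥0∞) ^ (2 * t)).toReal = y0 ^ (2 * t) := by
        rw [← ENNReal.coe_pow, ENNReal.coe_toReal, NNReal.coe_pow, coe_nnnorm,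
          Real.norm_eq_abs, pow_mul, sq_abs, ← pow_mul]
      rw [he]
      exact le_max_left _ _
    · obtain ⟨j, rfl⟩ : ∃ j, k = j + 1 := ⟨k - 1, by omega⟩
      have hξtop : ∫⁻ ω, (‖ξ (j + 1) ω‖₊ : ℝ≥0∞) ^ (2 * t) ∂μ = ⊤ := by
        rw [hlint, ← hent (ξ 1), ← hMdef, hfin]
        exact ENNReal.top_pow (by omega)
      -- independence of z j and ξ (j+1)
      have hIndep : IndepFun (fun ω => c (j + 1) * z j ω) (ξ (j + 1)) μ := by
        have hI := hindep.indepFun_finset (Finset.range (j + 1)) {j + 1}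
          (by simp [Finset.disjoint_left]; omega) hmeas
        have hg : Measurable fun u : ((Finset.range (j + 1) : Finset ℕ) → ℝ) =>
            c (j + 1) * F j (fun i => if h : i ∈ Finset.range (j + 1) then u ⟨i, h⟩ else 0) := by
          apply Measurable.const_mul
          apply (hFmeas j).comp
          apply measurable_pi_lambda
          intro i
          by_cases h : i ∈ Finset.range (j + 1)
          · simpa [h] using measurable_pi_apply (⟨i, h⟩ : (Finset.range (j + 1) : Finset ℕ))
          · simpa [h] using @measurable_const ℝ _ _ _ 0
        have hh : Measurable fun u : ((({j + 1} : Finset ℕ) : Finset ℕ) → ℝ) =>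
            u ⟨j + 1, by simp⟩ := measurable_pi_apply _
        have := hI.comp hg hh
        convert this using 1
        funext ω
        show c (j + 1) * z j ω
          = c (j + 1) * F j (fun i => if h : i ∈ Finset.range (j + 1) then ξ i ω else 0)
        congr 1
        apply hFdep
        intro i hi
        simp [Finset.mem_range, Nat.lt_succ_of_le hi]
        rfl
      have : ∫⁻ ω, (‖z (j + 1) ω‖₊ : ℝ≥0∞) ^ (2 * t) ∂μ = ⊤ := by
        have := aux_indep_sum_lintegral_top μ _ _
          ((measurable_const.mul (hzmeas j))) (hmeas (j + 1)) hIndep (2 * t) hξtop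
        simpa [hzrec, hcdef] using this
      rw [hint, this]
      simp only [ENNReal.toReal_top]
      have : (0 : ℝ) ≤ y0 ^ (2 * t) := by rw [pow_mul]; positivity
      exact le_max_of_le_left this
  · -- ξ in L^{2t}: uniform bound via the contraction
    have hB : B ≠ ⊤ := by
      rw [hBdef]
      refine ENNReal.add_ne_top.mpr ⟨ENNReal.ofReal_ne_top, ENNReal.mul_ne_top ?_ hfin⟩
      simp [ENNReal.inv_ne_top, ENNReal.ofReal_pos.mpr hε0, (ENNReal.ofReal_pos.mpr hε0).ne']
    have hzB : ∀ m, m ≤ n → eLpNorm (z m) p μ ≤ B := by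
      intro m
      induction m with
      | zero =>
        intro _
        have : z 0 = fun _ => y0 := rfl
        rw [this, eLpNorm_const _ hp0 (IsProbabilityMeasure.ne_zero μ)]
        simp only [measure_univ, ENNReal.one_rpow, mul_one]
        rw [Real.enorm_eq_ofReal_abs]
        exact le_self_add
      | succ j ih =>
        intro hj
        have hzj := ih (Nat.le_of_succ_le hj)
        have htri : eLpNorm (z (j + 1)) p μ
            ≤ eLpNorm (fun ω => c (j + 1) * z j ω) p μ + eLpNorm (ξ (j + 1)) p μ := by
          have : z (j + 1) = fun ω => (fun ω => c (j + 1) * z j ω) ω + ξ (j + 1) ω := by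
            funext ω; exact hzrec j ω
          rw [this]
          exact eLpNorm_add_le ((measurable_const.mul (hzmeas j)).aestronglyMeasurable)
            (hmeas (j + 1)).aestronglyMeasurable hp1
        have hsmul : eLpNorm (fun ω => c (j + 1) * z j ω) p μ
            ≤ ENNReal.ofReal (1 - ε) * eLpNorm (z j) p μ := by
          have h1 : eLpNorm (fun ω => c (j + 1) * z j ω) p μ
              ≤ (‖c (j + 1)‖₊ : ℝ≥0∞) * eLpNorm (z j) p μ := by
            have : (fun ω => c (j + 1) * z j ω) = c (j + 1) • z j := rfl
            rw [this]
            exact eLpNorm_const_smul_le (c := c (j + 1)) (f := z j) (p := p) (μ := μ)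
          refine h1.trans (mul_le_mul_left ?_ _)
          rw [← enorm_eq_nnnorm, Real.enorm_eq_ofReal_abs]
          exact ENNReal.ofReal_le_ofReal (hcb (j + 1) (Nat.succ_le_succ (Nat.zero_le _)) hj)
        calc eLpNorm (z (j + 1)) p μ
            ≤ ENNReal.ofReal (1 - ε) * eLpNorm (z j) p μ + Mξ := by
              refine htri.trans (add_le_add hsmul ?_)
              rw [hMk]
          _ ≤ ENNReal.ofReal (1 - ε) * B + Mξ := by gcongr
          _ ≤ B := by
              rw [hBdef, mul_add]
              have h1 : ENNReal.ofReal (1 - ε) * ENNReal.ofReal |y0| ≤ ENNReal.ofReal |y0| := by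
                refine mul_le_of_le_one_left (by positivity) ?_
                rw [← ENNReal.ofReal_one]
                exact ENNReal.ofReal_le_ofReal (by linarith)
              have h2 : ENNReal.ofReal (1 - ε) * ((ENNReal.ofReal ε)⁻¹ * Mξ) + Mξ
                  = (ENNReal.ofReal ε)⁻¹ * Mξ := by
                rw [← mul_assoc]
                have key : ENNReal.ofReal (1 - ε) * (ENNReal.ofReal ε)⁻¹ + 1
                    = (ENNReal.ofReal ε)⁻¹ := by
                  rw [← ENNReal.ofReal_inv_of_pos hε0, ← ENNReal.ofReal_mul (by linarith),
                    ← ENNReal.ofReal_one, ← ENNReal.ofReal_add (mul_nonneg (by linarith) (by positivity)) zero_le_one]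
                  congr 1
                  field_simp
                  ring
                calc ENNReal.ofReal (1 - ε) * (ENNReal.ofReal ε)⁻¹ * Mξ + Mξ
                    = (ENNReal.ofReal (1 - ε) * (ENNReal.ofReal ε)⁻¹ + 1) * Mξ := by ring
                  _ = (ENNReal.ofReal ε)⁻¹ * Mξ := by rw [key]
              calc ENNReal.ofReal (1 - ε) * ENNReal.ofReal |y0|
                    + ENNReal.ofReal (1 - ε) * ((ENNReal.ofReal ε)⁻¹ * Mξ) + Mξ
                  = ENNReal.ofReal (1 - ε) * ENNReal.ofReal |y0|
                    + (ENNReal.ofReal (1 - ε) * ((ENNReal.ofReal ε)⁻¹ * Mξ) + Mξ) := by ring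
                _ ≤ ENNReal.ofReal |y0| + (ENNReal.ofReal ε)⁻¹ * Mξ := by
                    rw [h2]; exact add_le_add h1 le_rfl
    rw [hint]
    refine le_max_of_le_right ?_
    have hbound : ∫⁻ ω, (‖z k ω‖₊ : ℝ≥0∞) ^ (2 * t) ∂μ ≤ B ^ (2 * t) := by
      rw [← hent]
      exact pow_le_pow_left' (hzB k hk) _
    exact ENNReal.toReal_mono (by simp [ENNReal.pow_ne_top hB]) hbound
end
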